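/- Let $M$ be a topological space, $(Y, d)$ a proper metric space, $T > 0$, and $F : M \times [0,T] \to Y$ a continuous proper map. Let $u : M \times [0,T] \to \mathbb{R}$ be continuous with $\sup_{M \times [0,T]} u > 0 \geq \sup_{x \in M} u(x,0)$, and suppose there are constants $B > 0$, $\alpha \in [0,1)$ and a point $y_0 \in Y$ such that $u(x,t) \leq B\,(1 + d(y_0, F(x,t))^{\alpha})$ for all $(x,t)$. Then there exist a sequence $\varepsilon_i > 0$ with $\varepsilon_i \to 0$ and points $(x_i, t_i) \in M \times (0,T]$ such that: (i) $(x_i,t_i)$ maximizes $u - \varepsilon_i\, d(y_0, F(\cdot,\cdot))^2$ over $M \times [0,T]$; (ii) $u(x_i, t_i) \to \sup_{M \times [0,T]} u$; and (iii) $\varepsilon_i\,\bigl(1 + d(y_0, F(x_i,t_i))\bigr) \to 0$ as $i \to \infty$. -/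

import Mathlib

open Filter Topology

private lemma rpow_le_one_add' {d α : ℝ} (hd : 0 ≤ d) (hα0 : 0 ≤ α) (hα1 : α ≤ 1) :
    d ^ α ≤ 1 + d := by
  rcases le_total d 1 with h | h
  · have := Real.rpow_le_one hd h hα0
    linarith
  · have h1 : d ^ α ≤ d ^ (1:ℝ) := Real.rpow_le_rpow_of_exponent_le h hα1
    rw [Real.rpow_one] at h1
    linarith

private lemma exists_penalized_max' {X Y : Type*} [TopologicalSpace X] [MetricSpace Y]
    [ProperSpace Y]
    (F : X → Y) (hFcont : Continuous F) (hFproper : IsProperMap F)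
    (u : X → ℝ) (hucont : Continuous u) [Nonempty X]
    (B : ℝ) (hB : 0 < B) (α : ℝ) (hα0 : 0 ≤ α) (hα1 : α ≤ 1) (y₀ : Y)
    (hgrowth : ∀ p, u p ≤ B * (1 + dist y₀ (F p) ^ α))
    (ε : ℝ) (hε : 0 < ε) :
    ∃ p, ∀ q, u q - ε * dist y₀ (F q) ^ 2 ≤ u p - ε * dist y₀ (F p) ^ 2 := by
  set φ : X → ℝ := fun q => u q - ε * dist y₀ (F q) ^ 2 with hφ
  have hφc : Continuous φ :=
    hucont.sub (continuous_const.mul ((continuous_const.dist hFcont).pow 2))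
  obtain ⟨p₀⟩ := ‹Nonempty X›
  set c : ℝ := φ p₀ with hc
  set R : ℝ := (3*B + |c| + 1)/ε + 1 with hR
  have hεR : ε * R = 3*B + |c| + 1 + ε := by
    rw [hR, mul_add, mul_one, mul_div_assoc', mul_div_cancel_left₀ _ hε.ne']
  have hR1 : 1 ≤ R := by
    nlinarith [abs_nonneg c]
  have key : ∀ q, R ≤ dist y₀ (F q) → φ q < c := by
    intro q hq
    have hd : 0 ≤ dist y₀ (F q) := dist_nonneg
    have h1 : u q ≤ B * (2 + dist y₀ (F q)) := by
      have h2 := rpow_le_one_add' hd hα0 hα1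
      have h3 := hgrowth q
      nlinarith
    have hd1 : 1 ≤ dist y₀ (F q) := le_trans hR1 hq
    have hsq : R * dist y₀ (F q) ≤ dist y₀ (F q) ^ 2 := by nlinarith
    have habs : -|c| ≤ c := neg_abs_le c
    simp only [hφ]
    nlinarith [mul_le_mul_of_nonneg_left hsq hε.le, hεR,
      mul_nonneg (sub_nonneg.2 hd1) hB.le,
      mul_nonneg (sub_nonneg.2 hd1) (abs_nonneg c),
      mul_nonneg (sub_nonneg.2 hd1) hε.le]
  set K : Set X := {q | c ≤ φ q} with hK
  have hKsub : K ⊆ F ⁻¹' (Metric.closedBall y₀ R) := by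
    intro q hq
    simp only [Set.mem_preimage, Metric.mem_closedBall]
    rw [dist_comm]
    by_contra h
    push_neg at h
    exact absurd hq (not_le.2 (key q h.le))
  have hKclosed : IsClosed K := isClosed_le continuous_const hφc
  have hKcompact : IsCompact K :=
    (hFproper.isCompact_preimage (isCompact_closedBall y₀ R)).of_isClosed_subset hKclosed hKsub
  obtain ⟨p, hpK, hpmax⟩ := hKcompact.exists_isMaxOn ⟨p₀, le_refl c⟩ hφc.continuousOn
  refine ⟨p, fun q => ?_⟩
  by_cases hq : q ∈ K
  · exact hpmax hq
  · exact le_trans (not_le.1 hq).le hpK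

/-- Metric-space core of the parabolic Omori-Yau maximum principle (Theorem 1.2):
there are penalization parameters `εᵢ → 0` and penalized maximizers `(xᵢ, tᵢ)`
occurring at positive times, realizing `sup u` in the limit, and with
`εᵢ (1 + d(y₀, F(xᵢ,tᵢ))) → 0`. -/
theorem stmt_2 {M : Type*} [TopologicalSpace M]
    {Y : Type*} [MetricSpace Y] [ProperSpace Y]
    (T : ℝ) (hT : 0 < T)
    (F : M × Set.Icc (0 : ℝ) T → Y)
    (hFcont : Continuous F) (hFproper : IsProperMap F)
    (u : M × Set.Icc (0 : ℝ) T → ℝ) (hucont : Continuous u)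
    (hsup : 0 < ⨆ p : M × Set.Icc (0 : ℝ) T, (u p : EReal))
    (hinit : ∀ x : M, u (x, ⟨0, Set.left_mem_Icc.mpr hT.le⟩) ≤ 0)
    (B : ℝ) (hB : 0 < B) (α : ℝ) (hα0 : 0 ≤ α) (hα1 : α < 1) (y₀ : Y)
    (hgrowth : ∀ p : M × Set.Icc (0 : ℝ) T,
      u p ≤ B * (1 + dist y₀ (F p) ^ α)) :
    ∃ (ε : ℕ → ℝ) (p : ℕ → M × Set.Icc (0 : ℝ) T),
      (∀ i, 0 < ε i) ∧ Tendsto ε atTop (𝓝 0) ∧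
      (∀ i, 0 < ((p i).2 : ℝ)) ∧
      (∀ i, ∀ q : M × Set.Icc (0 : ℝ) T,
        u q - ε i * dist y₀ (F q) ^ 2 ≤ u (p i) - ε i * dist y₀ (F (p i)) ^ 2) ∧
      Tendsto (fun i => (u (p i) : EReal)) atTop
        (𝓝 (⨆ q : M × Set.Icc (0 : ℝ) T, (u q : EReal))) ∧
      Tendsto (fun i => ε i * (1 + dist y₀ (F (p i)))) atTop (𝓝 0) := by
  have hne : Nonempty (M × Set.Icc (0 : ℝ) T) := by
    by_contra h
    rw [not_nonempty_iff] at h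
    rw [iSup_of_empty] at hsup
    exact absurd hsup (not_lt.2 bot_le)
  set S : EReal := ⨆ q : M × Set.Icc (0 : ℝ) T, (u q : EReal) with hSdef
  -- sequence toward sup
  obtain ⟨v, hvmono, hvtend, hvmem⟩ :=
    exists_seq_tendsto_sSup (α := EReal)
      (S := Set.range fun q : M × Set.Icc (0 : ℝ) T => (u q : EReal))
      (Set.range_nonempty _) (OrderTop.bddAbove _)
  rw [sSup_range] at hvtend
  choose q0 hq0 using fun n => Set.mem_range.1 (hvmem n)
  obtain ⟨N, hN⟩ := (hvtend.eventually (eventually_gt_nhds hsup)).exists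
  -- shifted sequence
  set q : ℕ → M × Set.Icc (0 : ℝ) T := fun n => q0 (n + N) with hqdef
  have hqpos : ∀ n, 0 < u (q n) := by
    intro n
    have h1 : (0 : EReal) < v (n + N) := lt_of_lt_of_le hN (hvmono (Nat.le_add_left N n))
    rw [← hq0 (n + N)] at h1
    simp only [hqdef]
    exact_mod_cast h1
  have hqtend : Tendsto (fun n => (u (q n) : EReal)) atTop (𝓝 S) := by
    have h1 : Tendsto (fun n => v (n + N)) atTop (𝓝 S) :=
      hvtend.comp (tendsto_add_atTop_nat N)
    convert h1 using 2 with n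
    exact (hq0 (n + N))
  -- the penalization parameters
  set D : ℕ → ℝ := fun n => dist y₀ (F (q n)) with hDdef
  have hD0 : ∀ n, 0 ≤ D n := fun n => dist_nonneg
  set ε : ℕ → ℝ := fun n =>
    min (1/(n+1)) (min (u (q n) / (2*(1 + D n^2))) (1/((n+1)*(1 + D n^2)))) with hεdef
  have hden : ∀ n, (0:ℝ) < 1 + D n ^ 2 := fun n => by nlinarith [sq_nonneg (D n)]
  have hn1 : ∀ n : ℕ, (0:ℝ) < n + 1 := fun n => by positivity
  have hεpos : ∀ n, 0 < ε n := by
    intro n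
    refine lt_min (by positivity) (lt_min ?_ ?_)
    · exact div_pos (hqpos n) (by nlinarith [hden n])
    · exact div_pos one_pos (by nlinarith [hden n, hn1 n])
  have hεle : ∀ n, ε n ≤ 1/(n+1) := fun n => min_le_left _ _
  have hεtend : Tendsto ε atTop (𝓝 0) :=
    squeeze_zero (fun n => (hεpos n).le) hεle tendsto_one_div_add_atTop_nhds_zero_nat
  have key1 : ∀ n, ε n * D n ^ 2 ≤ 1/(n+1) := by
    intro n
    have h1 : ε n ≤ 1/((n+1)*(1 + D n^2)) := le_trans (min_le_right _ _) (min_le_right _ _)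
    have h2 : ε n * D n ^ 2 ≤ (1/((n+1)*(1 + D n^2))) * D n ^ 2 :=
      mul_le_mul_of_nonneg_right h1 (sq_nonneg _)
    refine le_trans h2 ?_
    rw [div_mul_eq_mul_div, div_le_div_iff₀ (by nlinarith [hden n, hn1 n]) (hn1 n)]
    nlinarith [hden n, hn1 n, sq_nonneg (D n)]
  have key2 : ∀ n, ε n * D n ^ 2 < u (q n) := by
    intro n
    have h1 : ε n ≤ u (q n) / (2*(1 + D n^2)) := le_trans (min_le_right _ _) (min_le_left _ _)
    have h2 : ε n * D n ^ 2 ≤ (u (q n) / (2*(1 + D n^2))) * D n ^ 2 :=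
      mul_le_mul_of_nonneg_right h1 (sq_nonneg _)
    refine lt_of_le_of_lt h2 ?_
    rw [div_mul_eq_mul_div, div_lt_iff₀ (by nlinarith [hden n])]
    nlinarith [hden n, hqpos n, sq_nonneg (D n)]
  -- the maximizers
  have hmaxex : ∀ n, ∃ p, ∀ r, u r - ε n * dist y₀ (F r) ^ 2 ≤ u p - ε n * dist y₀ (F p) ^ 2 :=
    fun n => exists_penalized_max' F hFcont hFproper u hucont B hB α hα0 hα1.le y₀ hgrowth
      (ε n) (hεpos n)
  choose p hp using hmaxex
  set d : ℕ → ℝ := fun n => dist y₀ (F (p n)) with hddef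
  have hd0 : ∀ n, 0 ≤ d n := fun n => dist_nonneg
  have hppos : ∀ n, 0 < u (p n) - ε n * d n ^ 2 := by
    intro n
    calc (0:ℝ) < u (q n) - ε n * D n ^ 2 := by linarith [key2 n]
    _ ≤ u (p n) - ε n * d n ^ 2 := hp n (q n)
  have hupos : ∀ n, 0 < u (p n) := by
    intro n
    have := hppos n
    nlinarith [mul_nonneg (hεpos n).le (sq_nonneg (d n))]
  -- positive times
  have htpos : ∀ n, 0 < ((p n).2 : ℝ) := by
    intro n
    rcases lt_or_eq_of_le (p n).2.2.1 with h | h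
    · exact h
    · exfalso
      have hpe : p n = ((p n).1, ⟨0, Set.left_mem_Icc.mpr hT.le⟩) := by
        refine Prod.ext rfl (Subtype.ext ?_)
        exact h.symm
      have := hinit (p n).1
      rw [← hpe] at this
      exact absurd (hupos n) (not_lt.2 this)
  -- lower bound
  have hlow : ∀ n, u (q n) - 1/(n+1) ≤ u (p n) := by
    intro n
    have h1 := hp n (q n)
    have h2 := key1 n
    nlinarith [mul_nonneg (hεpos n).le (sq_nonneg (d n))]
  -- sup convergence
  have hsuple : ∀ n, (u (p n) : EReal) ≤ S := fun n => le_iSup (fun r => ((u r : EReal))) (p n)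
  have htendS : Tendsto (fun n => (u (p n) : EReal)) atTop (𝓝 S) := by
    refine tendsto_order.2 ⟨?_, ?_⟩
    · intro a ha
      rcases eq_or_ne a ⊥ with rfl | hbot
      · exact Eventually.of_forall fun n => EReal.bot_lt_coe _
      obtain ⟨b, hab, hbS⟩ := exists_between ha
      have hbtop : b ≠ ⊤ := ne_top_of_lt hbS
      have hbbot : b ≠ ⊥ := by
        rintro rfl
        exact absurd hab (not_lt.2 bot_le)
      have hatop : a ≠ ⊤ := ne_top_of_lt hab
      lift a to ℝ using ⟨hatop, hbot⟩
      lift b to ℝ using ⟨hbtop, hbbot⟩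
      have hab' : a < b := by exact_mod_cast hab
      have hev1 : ∀ᶠ n in atTop, (b : EReal) < (u (q n) : EReal) :=
        hqtend.eventually (eventually_gt_nhds hbS)
      have hev2 : ∀ᶠ n : ℕ in atTop, (1:ℝ)/((n:ℝ)+1) < b - a :=
        tendsto_one_div_add_atTop_nhds_zero_nat.eventually
          (eventually_lt_nhds (by linarith : (0:ℝ) < b - a))
      filter_upwards [hev1, hev2] with n h1 h2
      have h1' : b < u (q n) := by exact_mod_cast h1
      have := hlow n
      have : a < u (p n) := by linarith
      exact_mod_cast this
    · intro a ha
      exact Eventually.of_forall fun n => lt_of_le_of_lt (hsuple n) ha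
  -- the epsilon-distance estimate
  set β : ℝ := 1/(2-α) with hβdef
  have h2α : (0:ℝ) < 2 - α := by linarith
  have hβpos : 0 < β := by positivity
  have hβlt : β < 1 := by
    rw [hβdef, div_lt_one h2α]
    linarith
  have h1β : 0 < 1 - β := by linarith
  set C : ℝ := (2*B) ^ β with hCdef
  have hCpos : 0 < C := Real.rpow_pos_of_pos (by linarith) β
  have hbound : ∀ n, ε n * (1 + d n) ≤ 2 * ε n + C * ε n ^ (1 - β) := by
    intro n
    have hεn := hεpos n
    have hrpnn : 0 ≤ ε n ^ (1 - β) := Real.rpow_nonneg hεn.le _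
    rcases le_total (d n) 1 with h | h
    · nlinarith [mul_nonneg hCpos.le hrpnn]
    · -- 1 ≤ d n
      have hgr : u (p n) ≤ B * (1 + d n ^ α) := hgrowth (p n)
      have hda1 : 1 ≤ d n ^ α := Real.one_le_rpow h hα0
      have h2 : ε n * d n ^ 2 ≤ 2 * B * d n ^ α := by
        have := hppos n
        nlinarith
      have hdpos : (0:ℝ) < d n := lt_of_lt_of_le one_pos h
      have hsplit : (d n : ℝ) ^ 2 = d n ^ α * d n ^ (2 - α) := by
        rw [← Real.rpow_natCast (d n) 2, ← Real.rpow_add hdpos]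
        norm_num
      have h3 : ε n * d n ^ (2 - α) ≤ 2 * B := by
        rw [hsplit] at h2
        have hdapos : (0:ℝ) < d n ^ α := lt_of_lt_of_le one_pos hda1
        have := (mul_le_mul_iff_of_pos_right hdapos).2 (le_refl (1:ℝ))
        -- from ε * (d^α * d^{2-α}) ≤ 2B * d^α, divide by d^α
        have h4 : ε n * d n ^ (2 - α) * d n ^ α ≤ 2 * B * d n ^ α := by ring_nf; ring_nf at h2; linarith
        exact le_of_mul_le_mul_right h4 hdapos
      have h5 : d n ^ (2 - α) ≤ 2 * B / ε n := by
        rw [le_div_iff₀ hεn]; linarith [h3]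
      have h6 : d n ≤ (2 * B / ε n) ^ β := by
        have : d n = (d n ^ (2 - α)) ^ β := by
          rw [← Real.rpow_mul hdpos.le]
          rw [hβdef]
          field_simp
          rw [Real.rpow_one]
        rw [this]
        exact Real.rpow_le_rpow (Real.rpow_nonneg hdpos.le _) h5 hβpos.le
      have h7 : ε n * d n ≤ C * ε n ^ (1 - β) := by
        have h8 : (2 * B / ε n) ^ β = C / ε n ^ β :=
          Real.div_rpow (by linarith) hεn.le β
        have h9 : ε n * (C / ε n ^ β) = C * ε n ^ (1 - β) := by
          rw [Real.rpow_sub hεn, Real.rpow_one]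
          field_simp
        calc ε n * d n ≤ ε n * ((2 * B / ε n) ^ β) :=
              mul_le_mul_of_nonneg_left h6 hεn.le
          _ = C * ε n ^ (1 - β) := by rw [h8, h9]
      nlinarith [h7]
  have hRHStend : Tendsto (fun n => 2 * ε n + C * ε n ^ (1 - β)) atTop (𝓝 0) := by
    have h1 : Tendsto (fun n => ε n ^ (1 - β)) atTop (𝓝 ((0:ℝ) ^ (1 - β))) :=
      ((Real.continuousAt_rpow_const 0 (1 - β) (Or.inr h1β.le)).tendsto).comp hεtend
    rw [Real.zero_rpow (ne_of_gt h1β)] at h1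
    have h2 : Tendsto (fun n => 2 * ε n + C * ε n ^ (1 - β)) atTop (𝓝 (2 * 0 + C * 0)) :=
      ((hεtend.const_mul 2).add (h1.const_mul C))
    simpa using h2
  have hfinal : Tendsto (fun n => ε n * (1 + d n)) atTop (𝓝 0) :=
    squeeze_zero (fun n => mul_nonneg (hεpos n).le (by nlinarith [hd0 n])) hbound hRHStend
  exact ⟨ε, p, hεpos, hεtend, htpos, hp, htendS, hfinal⟩
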